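/- Let Γ be an infinite group acting on Alt(Γ) (the even finitary permutations of Γ) by conjugation with left translations. Suppose φ : Alt(Γ) ⋊ Γ → Λ is a group homomorphism that is injective on Alt(Γ) (viewed inside the semidirect product). If φ(σ, g) = 1 for some (σ, g), then σ = id and g = 1; that is, φ is injective on all of Alt(Γ) ⋊ Γ. -/

import Mathlib

open scoped Classical

/-- The set of 3-cycles of a type `X`, written as products of two transpositions. -/
def threeCycles (X : Type) : Set (Equiv.Perm X) :=
  {σ | ∃ a b c : X, a ≠ b ∧ a ≠ c ∧ b ≠ c ∧ σ = Equiv.swap a b * Equiv.swap a c}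

/-- `Alt(X)`: the group of even finitary permutations of `X`, realized as the
subgroup of `Equiv.Perm X` generated by all 3-cycles. -/
def altGroup (X : Type) : Subgroup (Equiv.Perm X) :=
  Subgroup.closure (threeCycles X)

lemma conj_threeCycles {X : Type} (π : Equiv.Perm X) :
    (MulAut.conj π).toMonoidHom '' threeCycles X ⊆ threeCycles X := by
  rintro _ ⟨σ, ⟨a, b, c, hab, hac, hbc, rfl⟩, rfl⟩
  refine ⟨π a, π b, π c, π.injective.ne hab, π.injective.ne hac, π.injective.ne hbc, ?_⟩
  simp only [MulEquiv.coe_toMonoidHom, MulAut.conj_apply]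
  rw [Equiv.swap_apply_apply π a b, Equiv.swap_apply_apply π a c]
  group

lemma altGroup_map_conj_le {X : Type} (π : Equiv.Perm X) :
    (altGroup X).map (MulAut.conj π).toMonoidHom ≤ altGroup X := by
  rw [altGroup, MonoidHom.map_closure]
  exact Subgroup.closure_mono (conj_threeCycles π)

lemma altGroup_map_conj {X : Type} (π : Equiv.Perm X) :
    (altGroup X).map (MulAut.conj π).toMonoidHom = altGroup X := by
  refine le_antisymm (altGroup_map_conj_le π) fun σ hσ => ?_
  refine ⟨(MulAut.conj π)⁻¹ σ, ?_, by simp; group⟩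
  exact altGroup_map_conj_le π⁻¹ ⟨σ, hσ, by simp⟩

/-- Conjugation of `Alt(Γ)` by the left translation `x ↦ g x`. -/
def altConjAut (Γ : Type) [Group Γ] (g : Γ) : MulAut (altGroup Γ) :=
  ((MulAut.conj (Equiv.mulLeft g : Equiv.Perm Γ)).subgroupMap (altGroup Γ)).trans
    (MulEquiv.subgroupCongr (altGroup_map_conj _))

/-- The action of `Γ` on `Alt(Γ)` given by `(g·σ)(x) = g σ (g⁻¹ x)`. -/
def altAction (Γ : Type) [Group Γ] : Γ →* MulAut (altGroup Γ) :=
  MonoidHom.mk' (fun g => altConjAut Γ g) (by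
    intro g h
    refine MulEquiv.ext fun σ => Subtype.ext ?_
    show MulAut.conj (Equiv.mulLeft (g * h)) (σ : Equiv.Perm Γ) =
      MulAut.conj (Equiv.mulLeft g) (MulAut.conj (Equiv.mulLeft h) (σ : Equiv.Perm Γ))
    rw [Equiv.mulLeft_mul, map_mul]
    rfl)


/-- finitely supported perms as a subgroup -/
def finSupp (X : Type) : Subgroup (Equiv.Perm X) where
  carrier := {σ | Set.Finite {x | σ x ≠ x}}
  one_mem' := by simp
  mul_mem' := by
    intro a b ha hb
    refine Set.Finite.subset (ha.union hb) ?_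
    intro x hx
    by_contra h
    simp only [Set.mem_union, Set.mem_setOf_eq, not_or, not_not] at h
    exact hx (by simp [Equiv.Perm.mul_apply, h.1, h.2])
  inv_mem' := by
    intro a ha
    refine Set.Finite.subset ha ?_
    intro x hx
    simp only [Set.mem_setOf_eq] at hx ⊢
    intro h
    exact hx (Equiv.Perm.inv_eq_iff_eq.mpr h.symm)

lemma altGroup_le_finSupp (X : Type) : altGroup X ≤ finSupp X := by
  rw [altGroup, Subgroup.closure_le]
  rintro _ ⟨a, b, c, hab, hac, hbc, rfl⟩
  refine Set.Finite.subset ((Set.finite_singleton c).insert b |>.insert a) ?_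
  intro x hx
  by_contra h
  simp only [Set.mem_insert_iff, Set.mem_singleton_iff, not_or] at h
  exact hx (by simp [Equiv.Perm.mul_apply, Equiv.swap_apply_of_ne_of_ne, h.1, h.2.1, h.2.2])

lemma centralizer_trivial {Γ : Type} [Infinite Γ] (π : Equiv.Perm Γ)
    (h : ∀ a b c : Γ, a ≠ b → a ≠ c → b ≠ c →
      π * (Equiv.swap a b * Equiv.swap a c) * π⁻¹ = Equiv.swap a b * Equiv.swap a c) :
    π = 1 := by
  ext a
  simp only [Equiv.Perm.one_apply]
  by_contra ha
  obtain ⟨b, hb⟩ := Infinite.exists_notMem_finset ({a, π a} : Finset Γ)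
  simp only [Finset.mem_insert, Finset.mem_singleton, not_or] at hb
  obtain ⟨c, hc⟩ := Infinite.exists_notMem_finset ({a, π a, b} : Finset Γ)
  simp only [Finset.mem_insert, Finset.mem_singleton, not_or] at hc
  have key := h a b c (Ne.symm hb.1) (Ne.symm hc.1) (fun e => hc.2.2 e.symm)
  have := congrArg (fun τ : Equiv.Perm Γ => τ (π a)) key
  simp only [Equiv.Perm.mul_apply, Equiv.Perm.inv_def, Equiv.symm_apply_apply] at this
  rw [Equiv.swap_apply_left, Equiv.swap_apply_of_ne_of_ne hc.1 hc.2.2,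
      Equiv.swap_apply_of_ne_of_ne ha (Ne.symm hc.2.1),
      Equiv.swap_apply_of_ne_of_ne ha (Ne.symm hb.2)] at this
  exact hc.1 (π.injective this)

lemma mem_finSupp {X : Type} {σ : Equiv.Perm X} :
    σ ∈ finSupp X ↔ Set.Finite {x | σ x ≠ x} := Iff.rfl

lemma altAction_coe {Γ : Type} [Group Γ] (g : Γ) (τ : altGroup Γ) :
    ((altAction Γ g τ : altGroup Γ) : Equiv.Perm Γ) =
      Equiv.mulLeft g * (τ : Equiv.Perm Γ) * (Equiv.mulLeft g)⁻¹ := rfl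

theorem semidirect_injective_of_injOn_alt (Γ Λ : Type) [Group Γ] [Infinite Γ] [Group Λ]
    (f : (altGroup Γ ⋊[altAction Γ] Γ) →* Λ)
    (hinj : Function.Injective (f.comp SemidirectProduct.inl)) :
    (∀ (σ : altGroup Γ) (g : Γ), f ⟨σ, g⟩ = 1 → σ = 1 ∧ g = 1) ∧
    Function.Injective f := by
  have key : ∀ (σ : altGroup Γ) (g : Γ), f ⟨σ, g⟩ = 1 → σ = 1 ∧ g = 1 := by
    intro σ g hfg
    have hconj : ∀ τ : altGroup Γ, σ * (altAction Γ g τ) * σ⁻¹ = τ := by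
      intro τ
      apply hinj
      have hmk : (SemidirectProduct.inl (σ * altAction Γ g τ * σ⁻¹) :
          altGroup Γ ⋊[altAction Γ] Γ) =
          (⟨σ, g⟩ : altGroup Γ ⋊[altAction Γ] Γ) * SemidirectProduct.inl τ *
            (⟨σ, g⟩ : altGroup Γ ⋊[altAction Γ] Γ)⁻¹ := by
        ext
        · simp [mul_assoc]
        · simp
      rw [MonoidHom.comp_apply, MonoidHom.comp_apply, hmk, map_mul, map_mul, map_inv, hfg,
        one_mul, inv_one, mul_one]
    have hπ : (σ : Equiv.Perm Γ) * Equiv.mulLeft g = 1 := by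
      apply centralizer_trivial
      intro a b c hab hac hbc
      have hτ : Equiv.swap a b * Equiv.swap a c ∈ altGroup Γ :=
        Subgroup.subset_closure ⟨a, b, c, hab, hac, hbc, rfl⟩
      have hc := congrArg (Subtype.val) (hconj ⟨_, hτ⟩)
      simp only [Subgroup.coe_mul, InvMemClass.coe_inv, altAction_coe] at hc
      simpa only [mul_inv_rev, mul_assoc] using hc
    have hg : g = 1 := by
      by_contra hg
      have hσinv : Equiv.mulLeft g = (σ : Equiv.Perm Γ)⁻¹ :=
        eq_inv_of_mul_eq_one_right hπ
      have hmem : Equiv.mulLeft g ∈ finSupp Γ :=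
        altGroup_le_finSupp Γ (hσinv ▸ inv_mem σ.2)
      rw [mem_finSupp] at hmem
      have huniv : {x : Γ | Equiv.mulLeft g x ≠ x} = Set.univ := by
        ext x
        simp [mul_eq_right, hg]
      rw [huniv] at hmem
      exact Set.infinite_univ hmem
    have hσ : (σ : Equiv.Perm Γ) = 1 := by
      rw [hg] at hπ
      simpa using hπ
    exact ⟨Subtype.ext hσ, hg⟩
  refine ⟨key, ?_⟩
  rw [injective_iff_map_eq_one]
  rintro ⟨σ, g⟩ hx
  obtain ⟨h1, h2⟩ := key σ g hx
  rw [show ((1 : altGroup Γ ⋊[altAction Γ] Γ)) = ⟨1, 1⟩ from rfl, h1, h2]
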